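/- Let (X,d) be a T₁ quasi-metric space whose forward topology is normal. If (X,d) is a UC space, then every open cover of (X,d) has a Lebesgue number: there exists δ>0 such that for each x∈X, B⁺(x,δ) is contained in some member of the cover. -/
import Mathlib


open Filter Topology Set

structure IsQuasiMetric {X : Type*} (d : X → X → ℝ) : Prop where
  nonneg : ∀ x y, 0 ≤ d x y
  refl : ∀ x, d x x = 0
  eq_of_both_zero : ∀ x y, d x y = 0 → d y x = 0 → x = y
  triangle : ∀ x y z, d x y ≤ d x z + d z y

/-- The forward topology generated by forward balls `B⁺(x,ε) = {y | d x y < ε}`. -/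
def forwardTopology {X : Type*} (d : X → X → ℝ) : TopologicalSpace X :=
  TopologicalSpace.generateFrom {S | ∃ x : X, ∃ ε : ℝ, 0 < ε ∧ S = {y | d x y < ε}}

/-- `s` forward converges to `x`: `d x (s n) → 0`. -/
def ForwardConv {X : Type*} (d : X → X → ℝ) (s : ℕ → X) (x : X) : Prop :=
  ∀ ε > (0:ℝ), ∃ N : ℕ, ∀ n ≥ N, d x (s n) < ε

/-- `s` backward converges to `x`: `d (s n) x → 0`. -/
def BackwardConv {X : Type*} (d : X → X → ℝ) (s : ℕ → X) (x : X) : Prop :=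
  ∀ ε > (0:ℝ), ∃ N : ℕ, ∀ n ≥ N, d (s n) x < ε

/-- `x` is a cluster point of `s`: some subsequence forward converges to `x`. -/
def IsClusterPointOf {X : Type*} (d : X → X → ℝ) (s : ℕ → X) (x : X) : Prop :=
  ∃ φ : ℕ → ℕ, StrictMono φ ∧ ForwardConv d (s ∘ φ) x

def LeftKCauchy {X : Type*} (d : X → X → ℝ) (s : ℕ → X) : Prop :=
  ∀ ε > (0:ℝ), ∃ n₀ : ℕ, ∀ k n : ℕ, n₀ ≤ k → k ≤ n → d (s k) (s n) < ε

/-- `s` is forward parallel to `t`. -/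
def ForwardParallel {X : Type*} (d : X → X → ℝ) (s t : ℕ → X) : Prop :=
  ∀ ε > (0:ℝ), ∃ N : ℕ, ∀ n ≥ N, d (s n) (t n) < ε

/-- Forward continuity for real-valued functions (ε-δ form). -/
def ForwardContinuous {X : Type*} (d : X → X → ℝ) (f : X → ℝ) : Prop :=
  ∀ x₀ : X, ∀ ε > (0:ℝ), ∃ δ > (0:ℝ), ∀ y, d x₀ y < δ → |f x₀ - f y| < ε

/-- Uniform continuity for real-valued functions. -/
def UniformlyCont {X : Type*} (d : X → X → ℝ) (f : X → ℝ) : Prop :=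
  ∀ ε > (0:ℝ), ∃ δ > (0:ℝ), ∀ x y, d x y < δ → |f x - f y| < ε

/-- `(X,d)` is a UC quasi-metric space. -/
def IsUC {X : Type*} (d : X → X → ℝ) : Prop :=
  ∀ f : X → ℝ, ForwardContinuous d f → UniformlyCont d f

/-- Distance between two sets: `inf {d a b | a ∈ A, b ∈ B}`. -/
noncomputable def setDist {X : Type*} (d : X → X → ℝ) (A B : Set X) : ℝ :=
  sInf {r : ℝ | ∃ a ∈ A, ∃ b ∈ B, d a b = r}

/-- Forward balls are open in the forward topology. -/
lemma fwd_ball_open {X : Type*} (d : X → X → ℝ) {p : X} {δ : ℝ} (hδ : 0 < δ) :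
    (forwardTopology d).IsOpen {y | d p y < δ} :=
  TopologicalSpace.GenerateOpen.basic _ ⟨p, δ, hδ, rfl⟩

/-- A set is forward-open if it contains a forward ball around each of its points. -/
lemma fwd_open_of_ball {X : Type*} (d : X → X → ℝ) (hd : IsQuasiMetric d) {C : Set X}
    (h : ∀ q ∈ C, ∃ δ > (0:ℝ), {y | d q y < δ} ⊆ C) : (forwardTopology d).IsOpen C := by
  have hC : C = ⋃₀ {B : Set X | B ⊆ C ∧ ∃ q ε, 0 < ε ∧ B = {y | d q y < ε}} := by
    apply Set.Subset.antisymm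
    · intro q hq
      obtain ⟨δ, hδ, hsub⟩ := h q hq
      exact ⟨{y | d q y < δ}, ⟨hsub, q, δ, hδ, rfl⟩, by simpa [hd.refl q] using hδ⟩
    · rintro w ⟨B, ⟨hBC, -⟩, hwB⟩
      exact hBC hwB
  rw [hC]
  exact TopologicalSpace.GenerateOpen.sUnion _
    (by rintro B ⟨-, q, ε, hε, rfl⟩; exact .basic _ ⟨q, ε, hε, rfl⟩)

/-- In the forward topology, every open set contains a forward ball around each of
its points. -/
lemma fwd_exists_ball {X : Type*} (d : X → X → ℝ) (hd : IsQuasiMetric d) {S : Set X}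
    (hS : (forwardTopology d).IsOpen S) :
    ∀ x ∈ S, ∃ δ > (0:ℝ), {y | d x y < δ} ⊆ S := by
  have hS' : TopologicalSpace.GenerateOpen
      {S | ∃ x : X, ∃ ε : ℝ, 0 < ε ∧ S = {y | d x y < ε}} S := hS
  clear hS
  induction hS' with
  | basic u hu =>
    rintro w hw
    obtain ⟨z, ε, hε, rfl⟩ := hu
    have hw' : d z w < ε := hw
    refine ⟨ε - d z w, by linarith, fun y hy => ?_⟩
    have hy' : d w y < ε - d z w := hy
    have := hd.triangle z y w
    show d z y < ε
    linarith
  | univ => exact fun x _ => ⟨1, one_pos, fun y _ => trivial⟩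
  | inter u v hu hv ihu ihv =>
    intro w hw
    obtain ⟨δ₁, h₁, s₁⟩ := ihu w hw.1
    obtain ⟨δ₂, h₂, s₂⟩ := ihv w hw.2
    refine ⟨min δ₁ δ₂, lt_min h₁ h₂, fun y hy => ?_⟩
    have hy' : d w y < min δ₁ δ₂ := hy
    exact ⟨s₁ (show d w y < δ₁ from lt_of_lt_of_le hy' (min_le_left _ _)),
           s₂ (show d w y < δ₂ from lt_of_lt_of_le hy' (min_le_right _ _))⟩
  | sUnion s hs ih =>
    intro w hw
    obtain ⟨t, ht, hwt⟩ := hw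
    obtain ⟨δ, hδ, hsub⟩ := ih t ht w hwt
    exact ⟨δ, hδ, hsub.trans (Set.subset_sUnion_of_mem ht)⟩

/-- T₁ forces the quasi-metric to be positive on distinct points. -/
lemma fwd_pos_of_ne {X : Type*} (d : X → X → ℝ) (hd : IsQuasiMetric d)
    (hT1 : @T1Space X (forwardTopology d)) {a b : X} (hab : a ≠ b) : 0 < d a b := by
  letI : TopologicalSpace X := forwardTopology d
  haveI : T1Space X := hT1
  have hopen : (forwardTopology d).IsOpen {b}ᶜ := (isClosed_singleton (x := b)).isOpen_compl
  obtain ⟨δ, hδ, hsub⟩ := fwd_exists_ball d hd hopen a (by simpa using hab)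
  by_contra hle
  push_neg at hle
  have : b ∈ ({b}ᶜ : Set X) := hsub (show d a b < δ from lt_of_le_of_lt hle hδ)
  simp at this

/-- Topological continuity implies ε-δ forward continuity. -/
lemma fwd_cont_of_continuous {X : Type*} (d : X → X → ℝ) (hd : IsQuasiMetric d)
    (f : X → ℝ) (hf : @Continuous X ℝ (forwardTopology d) _ f) : ForwardContinuous d f := by
  intro x₀ ε hε
  have hopen : (forwardTopology d).IsOpen (f ⁻¹' Set.Ioo (f x₀ - ε) (f x₀ + ε)) :=
    @Continuous.isOpen_preimage X ℝ (forwardTopology d) _ f hf _ isOpen_Ioo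
  have hx₀ : x₀ ∈ f ⁻¹' Set.Ioo (f x₀ - ε) (f x₀ + ε) := by
    constructor <;> linarith
  obtain ⟨δ, hδ, hsub⟩ := fwd_exists_ball d hd hopen x₀ hx₀
  refine ⟨δ, hδ, fun y hy => ?_⟩
  have := hsub hy
  have h1 : f x₀ - ε < f y := this.1
  have h2 : f y < f x₀ + ε := this.2
  rw [abs_sub_lt_iff]
  constructor <;> linarith

/-- A sequence that eventually stays forward-far from every point has closed range. -/
lemma fwd_closed_of_far {X : Type*} (d : X → X → ℝ) (hd : IsQuasiMetric d)
    (hT1 : @T1Space X (forwardTopology d)) (z : ℕ → X)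
    (hfar : ∀ q : X, ∃ ε > (0:ℝ), ∃ N : ℕ, ∀ n ≥ N, ε ≤ d q (z n)) :
    @IsClosed X (forwardTopology d) {p | ∃ n, p = z n} := by
  classical
  letI : TopologicalSpace X := forwardTopology d
  rw [← isOpen_compl_iff]
  apply fwd_open_of_ball d hd
  intro q hq
  have hqne : ∀ n, q ≠ z n := by
    intro n hn
    exact hq ⟨n, hn⟩
  obtain ⟨ε, hε, N, hN⟩ := hfar q
  set F : Finset ℝ := insert ε ((Finset.range N).image (fun n => d q (z n))) with hF
  have hFne : F.Nonempty := ⟨ε, by simp [hF]⟩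
  refine ⟨F.min' hFne, ?_, ?_⟩
  · show (0:ℝ) < F.min' hFne
    rw [Finset.lt_min'_iff]
    intro r hr
    rw [hF, Finset.mem_insert] at hr
    rcases hr with rfl | hr
    · exact hε
    · obtain ⟨n, -, rfl⟩ := Finset.mem_image.mp hr
      exact fwd_pos_of_ne d hd hT1 (hqne n)
  · rintro w hw ⟨n, rfl⟩
    have hw' : d q (z n) < F.min' hFne := hw
    rcases lt_or_ge n N with hn | hn
    · have hmem : d q (z n) ∈ F := by
        rw [hF, Finset.mem_insert]
        exact Or.inr (Finset.mem_image.mpr ⟨n, Finset.mem_range.mpr hn, rfl⟩)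
      exact absurd (Finset.min'_le _ _ hmem) (not_le.mpr hw')
    · have h1 : F.min' hFne ≤ ε := Finset.min'_le _ _ (by simp [hF])
      have h2 := hN n hn
      linarith

/-- a T₁, normal, UC quasi-metric space has the Lebesgue number property. -/
theorem lebesgue_of_isUC {X : Type*} (d : X → X → ℝ) (hd : IsQuasiMetric d)
    (hT1 : @T1Space X (forwardTopology d))
    (hN : @NormalSpace X (forwardTopology d))
    (hUC : IsUC d) :
    ∀ 𝒰 : Set (Set X), (∀ U ∈ 𝒰, (forwardTopology d).IsOpen U) →
      ⋃₀ 𝒰 = Set.univ →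
      ∃ δ > (0:ℝ), ∀ x : X, ∃ U ∈ 𝒰, {y : X | d x y < δ} ⊆ U := by
  classical
  intro 𝒰 hopen hcov
  letI : TopologicalSpace X := forwardTopology d
  haveI : T1Space X := hT1
  haveI : NormalSpace X := hN
  by_contra hcon
  push_neg at hcon
  -- bad witnesses x n for δ = 1/(n+1)
  have hwit : ∀ n : ℕ, ∃ p : X, ∀ U ∈ 𝒰, ¬ {y : X | d p y < 1/(n+1)} ⊆ U := fun n =>
    hcon (1/(n+1)) (by positivity)
  choose x hx using hwit
  -- every point of X lies in some member of the cover
  have hmem : ∀ p : X, ∃ U ∈ 𝒰, p ∈ U := by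
    intro p
    have : p ∈ ⋃₀ 𝒰 := hcov ▸ Set.mem_univ p
    obtain ⟨U, hU, hpU⟩ := this
    exact ⟨U, hU, hpU⟩
  -- choose U n ∋ x n and y n ∈ B⁺(x n, 1/(n+1)) \ U n
  have hyex : ∀ n : ℕ, ∃ q : X, d (x n) q < 1/(n+1) ∧ q ∉ (hmem (x n)).choose := by
    intro n
    have hU := (hmem (x n)).choose_spec.1
    obtain ⟨q, hq1, hq2⟩ := Set.not_subset.mp (hx n _ hU)
    exact ⟨q, hq1, hq2⟩
  choose y hy1 hy2 using hyex
  have hxy : ∀ n, x n ≠ y n := by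
    intro n hn
    exact hy2 n (hn ▸ (hmem (x n)).choose_spec.2)
  -- Fact 2: every point is eventually forward-far from the x n
  have hfarx : ∀ p : X, ∃ ε > (0:ℝ), ∃ N : ℕ, ∀ n ≥ N, ε ≤ d p (x n) := by
    intro p
    obtain ⟨U, hU, hpU⟩ := hmem p
    obtain ⟨δ, hδ, hsub⟩ := fwd_exists_ball d hd (hopen U hU) p hpU
    obtain ⟨N, hN⟩ := exists_nat_gt (2/δ)
    refine ⟨δ/2, by linarith, N, fun n hn => ?_⟩
    by_contra hlt
    push_neg at hlt
    apply hx n U hU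
    intro w hw
    have hw' : d (x n) w < 1/(n+1) := hw
    have htri := hd.triangle p w (x n)
    have hn1 : (1:ℝ)/(n+1) ≤ 1/(N+1) := by
      apply one_div_le_one_div_of_le (by positivity)
      exact_mod_cast Nat.succ_le_succ hn
    have hN1 : (1:ℝ)/(N+1) ≤ δ/2 := by
      rw [div_le_div_iff₀ (by positivity) (by norm_num)]
      have h2δ : (0:ℝ) < 2/δ := by positivity
      have : (2:ℝ)/δ * δ ≤ (N+1) * δ := by nlinarith
      rw [div_mul_cancel₀] at this <;> nlinarith
    exact hsub (show d p w < δ by linarith)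
  -- case split: does (y n) have a forward cluster point?
  by_cases hcl : ∃ p : X, ∀ ε > (0:ℝ), ∀ K : ℕ, ∃ n ≥ K, d p (y n) < ε
  · -- Case A: p is a forward cluster point of (y n)
    obtain ⟨p, hp⟩ := hcl
    obtain ⟨ε, hε, N, hN⟩ := hfarx p
    set A : Set X := {w | ∃ n, N ≤ n ∧ w = x n} with hA
    have hpA : p ∉ closure A := by
      rw [mem_closure_iff]
      push_neg
      refine ⟨{w | d p w < ε}, fwd_ball_open d hε, by simpa [hd.refl p] using hε, ?_⟩
      rw [Set.eq_empty_iff_forall_notMem]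
      rintro w ⟨hw, n, hn, rfl⟩
      exact absurd (hN n hn) (not_le.mpr hw)
    obtain ⟨f, hf0, hf1, -⟩ := exists_continuous_zero_one_of_isClosed
      (isClosed_closure (s := A)) (isClosed_singleton (x := p))
      (Set.disjoint_singleton_right.mpr hpA)
    have hfc : ForwardContinuous d f := fwd_cont_of_continuous d hd f f.continuous
    obtain ⟨δ, hδ, hδuc⟩ := hUC f hfc (1/3) (by norm_num)
    obtain ⟨δ', hδ', hδ'c⟩ := hfc p (1/3) (by norm_num)
    obtain ⟨M, hM⟩ := exists_nat_gt (1/δ)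
    obtain ⟨n, hn, hny⟩ := hp δ' hδ' (max N M)
    have hnN : N ≤ n := le_trans (le_max_left _ _) hn
    have hnM : M ≤ n := le_trans (le_max_right _ _) hn
    have hfxn : f (x n) = 0 := hf0 (subset_closure ⟨n, hnN, rfl⟩)
    have hfp : f p = 1 := hf1 rfl
    have hsmall : d (x n) (y n) < δ := by
      have h1 : (1:ℝ)/(n+1) ≤ 1/(M+1) := by
        apply one_div_le_one_div_of_le (by positivity)
        exact_mod_cast Nat.succ_le_succ hnM
      have h2 : (1:ℝ)/(M+1) < δ := by
        rw [div_lt_iff₀ (by positivity)]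
        have hδ1 : 1/δ < (M:ℝ) := hM
        rw [div_lt_iff₀ hδ] at hδ1
        nlinarith
      have := hy1 n
      linarith
    have huc := hδuc (x n) (y n) hsmall
    have hcp := hδ'c (y n) hny
    rw [abs_sub_lt_iff] at huc hcp
    linarith [huc.1, huc.2, hcp.1, hcp.2, hfxn, hfp]
  · -- Case B: no forward cluster point of (y n)
    push_neg at hcl
    have hfary : ∀ p : X, ∃ ε > (0:ℝ), ∃ K : ℕ, ∀ n ≥ K, ε ≤ d p (y n) := by
      intro p
      obtain ⟨ε, hε, K, hK⟩ := hcl p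
      exact ⟨ε, hε, K, fun n hn => hK n hn⟩
    choose εx hεx Nx hNx using hfarx
    choose εy hεy Ky hKy using hfary
    -- build a strictly increasing index sequence avoiding all coincidences
    obtain ⟨m, -, hmsucc⟩ :
        ∃ m : ℕ → ℕ, m 0 = 0 ∧
          ∀ i, m (i+1) = max (m i + 1) (max (Nx (y (m i))) (Ky (x (m i)))) :=
      ⟨fun i => Nat.rec 0 (fun _ mi => max (mi + 1) (max (Nx (y mi)) (Ky (x mi)))) i,
        rfl, fun i => rfl⟩
    have hmlt : ∀ i, m i < m (i+1) := by
      intro i; rw [hmsucc]; exact lt_of_lt_of_le (Nat.lt_succ_self _) (le_max_left _ _)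
    have hmono : StrictMono m := strictMono_nat_of_lt_succ hmlt
    have hmNx : ∀ j i, j < i → Nx (y (m j)) ≤ m i := by
      intro j i hji
      calc Nx (y (m j)) ≤ max (Nx (y (m j))) (Ky (x (m j))) := le_max_left _ _
        _ ≤ m (j+1) := by rw [hmsucc]; exact le_max_right _ _
        _ ≤ m i := hmono.monotone hji
    have hmKy : ∀ j i, j < i → Ky (x (m j)) ≤ m i := by
      intro j i hji
      calc Ky (x (m j)) ≤ max (Nx (y (m j))) (Ky (x (m j))) := le_max_right _ _
        _ ≤ m (j+1) := by rw [hmsucc]; exact le_max_right _ _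
        _ ≤ m i := hmono.monotone hji
    have hne : ∀ i j, x (m i) ≠ y (m j) := by
      intro i j hij
      rcases lt_trichotomy i j with h | h | h
      · have := hKy (x (m i)) (m j) (hmKy i j h)
        rw [← hij, hd.refl] at this
        exact absurd this (not_le.mpr (hεy (x (m i))))
      · exact hxy (m i) (h ▸ hij)
      · have := hNx (y (m j)) (m i) (hmNx j i h)
        rw [hij, hd.refl] at this
        exact absurd this (not_le.mpr (hεx (y (m j))))
    set A : Set X := {p | ∃ i, p = x (m i)} with hA
    set B : Set X := {p | ∃ i, p = y (m i)} with hB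
    have hAclosed : IsClosed A := by
      apply fwd_closed_of_far d hd hT1
      intro q
      exact ⟨εx q, hεx q, Nx q, fun i hi =>
        hNx q (m i) (le_trans hi (hmono.le_apply))⟩
    have hBclosed : IsClosed B := by
      apply fwd_closed_of_far d hd hT1
      intro q
      exact ⟨εy q, hεy q, Ky q, fun i hi =>
        hKy q (m i) (le_trans hi (hmono.le_apply))⟩
    have hdisj : Disjoint A B := by
      rw [Set.disjoint_left]
      rintro p ⟨i, rfl⟩ ⟨j, hj⟩
      exact hne i j hj
    obtain ⟨f, hf0, hf1, -⟩ := exists_continuous_zero_one_of_isClosed hAclosed hBclosed hdisj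
    have hfc : ForwardContinuous d f := fwd_cont_of_continuous d hd f f.continuous
    obtain ⟨δ, hδ, hδuc⟩ := hUC f hfc (1/3) (by norm_num)
    obtain ⟨M, hM⟩ := exists_nat_gt (1/δ)
    have hsmall : d (x (m M)) (y (m M)) < δ := by
      have h0 : (M:ℕ) ≤ m M := hmono.le_apply
      have h1 : (1:ℝ)/((m M : ℝ) + 1) ≤ 1/(M+1) := by
        apply one_div_le_one_div_of_le (by positivity)
        exact_mod_cast Nat.succ_le_succ h0
      have h2 : (1:ℝ)/(M+1) < δ := by
        rw [div_lt_iff₀ (by positivity)]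
        have hδ1 : 1/δ < (M:ℝ) := hM
        rw [div_lt_iff₀ hδ] at hδ1
        nlinarith
      have := hy1 (m M)
      linarith
    have huc := hδuc (x (m M)) (y (m M)) hsmall
    rw [hf0 ⟨M, rfl⟩, hf1 ⟨M, rfl⟩] at huc
    norm_num at huc
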